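/- Let R_1, …, R_n and Q_1, …, Q_m be families of nonzero non-unital rings whose underlying additive groups are torsion-free and finitely generated. Assume that for every i and j the ℚ-algebras R_i ⊗_ℤ ℚ and Q_j ⊗_ℤ ℚ are indecomposable non-unital ℚ-algebras, and that for every prime p the (ℤ/pℤ)-algebras R_i ⊗_ℤ (ℤ/pℤ) and Q_j ⊗_ℤ (ℤ/pℤ) are indecomposable non-unital (ℤ/pℤ)-algebras. If the product rings R_1 × ⋯ × R_n and Q_1 × ⋯ × Q_m are isomorphic as non-unital rings, then n = m and there exists a bijection σ : {1,…,n} → {1,…,m} such that R_i is isomorphic to Q_{σ(i)} as a non-unital ring for every i. -/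

import Mathlib

open TensorProduct

/-- A bundled non-unital (associative) `k`-algebra: a `k`-module with an
associative `k`-bilinear multiplication (no unit required). -/
structure NuAlgebra (k : Type) [CommRing k] : Type 1 where
  carrier : Type
  [instNonUnitalRing : NonUnitalRing carrier]
  [instModule : Module k carrier]
  [instSMulCommClass : SMulCommClass k carrier carrier]
  [instIsScalarTower : IsScalarTower k carrier carrier]

attribute [instance] NuAlgebra.instNonUnitalRing NuAlgebra.instModule
  NuAlgebra.instSMulCommClass NuAlgebra.instIsScalarTower

/-- Two non-unital `k`-algebras are isomorphic if there is a multiplicative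
`k`-linear equivalence between them. -/
def NuAlgIso (k : Type) [CommRing k] (A B : Type)
    [NonUnitalRing A] [Module k A] [NonUnitalRing B] [Module k B] : Prop :=
  ∃ e : A ≃ₗ[k] B, ∀ x y : A, e (x * y) = e x * e y

/-- A non-unital `k`-algebra is decomposable if it is isomorphic, as a non-unital
`k`-algebra, to a product (with componentwise operations) of two nonzero
non-unital `k`-algebras; indecomposable otherwise. -/
def IsDecomposableAlg (k : Type) [CommRing k] (A : Type)
    [NonUnitalRing A] [Module k A] : Prop :=
  ∃ B C : NuAlgebra k, Nontrivial B.carrier ∧ Nontrivial C.carrier ∧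
    NuAlgIso k A (B.carrier × C.carrier)

/-- A monoid is torsion-free if no nontrivial element has finite order
(the definition `AddMonoid.IsTorsionFree` of the older Mathlib, since removed). -/
def AddMonoid.IsTorsionFree (G : Type*) [AddMonoid G] : Prop :=
  ∀ g : G, g ≠ 0 → ¬IsOfFinAddOrder g

set_option linter.unusedSectionVars false

/-! ### Centroid elements -/

/-- `f` is a centroid map: `f (x*y) = f x * y = x * f y`. -/
def IsCent {A : Type*} [Mul A] (f : A → A) : Prop :=
  ∀ x y : A, f (x * y) = f x * y ∧ f (x * y) = x * f y

section Cent

variable {k : Type} [CommRing k] {A : Type*} [NonUnitalRing A] [Module k A]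
  [SMulCommClass k A A] [IsScalarTower k A A]

theorem IsCent.one : IsCent (⇑(1 : Module.End k A)) := by
  intro x y; simp [Module.End.one_apply]

theorem IsCent.add {f g : Module.End k A} (hf : IsCent ⇑f) (hg : IsCent ⇑g) :
    IsCent ⇑(f + g) := by
  intro x y
  simp only [LinearMap.add_apply]
  rw [(hf x y).1, (hg x y).1, add_mul]
  refine ⟨rfl, ?_⟩
  rw [← (hf x y).1, ← (hg x y).1, (hf x y).2, (hg x y).2, mul_add]

theorem IsCent.neg {f : Module.End k A} (hf : IsCent ⇑f) : IsCent ⇑(-f) := by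
  intro x y
  refine ⟨?_, ?_⟩ <;> simp only [LinearMap.neg_apply]
  · rw [(hf x y).1]; exact (neg_mul _ _).symm
  · rw [(hf x y).2]; exact (mul_neg _ _).symm

theorem IsCent.sub {f g : Module.End k A} (hf : IsCent ⇑f) (hg : IsCent ⇑g) :
    IsCent ⇑(f - g) := by
  rw [sub_eq_add_neg]; exact hf.add hg.neg

theorem IsCent.mul {f g : Module.End k A} (hf : IsCent ⇑f) (hg : IsCent ⇑g) :
    IsCent ⇑(f * g) := by
  intro x y
  simp only [Module.End.mul_apply]
  constructor
  · rw [(hg x y).1, (hf (g x) y).1]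
  · rw [(hg x y).2, (hf x (g y)).2]

theorem IsCent.smul {f : Module.End k A} (hf : IsCent ⇑f) (a : k) : IsCent ⇑(a • f) := by
  intro x y
  simp only [LinearMap.smul_apply]
  constructor
  · rw [(hf x y).1, smul_mul_assoc]
  · rw [(hf x y).2, mul_smul_comm]

theorem IsCent.pow {f : Module.End k A} (hf : IsCent ⇑f) (n : ℕ) (hn : n ≠ 0) :
    IsCent ⇑(f ^ n) := by
  induction n with
  | zero => exact absurd rfl hn
  | succ t ih =>
    rcases Nat.eq_zero_or_pos t with ht | ht
    · subst ht; simpa using hf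
    · rw [pow_succ]; exact (ih ht.ne').mul hf

theorem IsCent.sum {ι : Type*} (s : Finset ι) (f : ι → Module.End k A)
    (hf : ∀ i ∈ s, IsCent ⇑(f i)) : IsCent ⇑(∑ i ∈ s, f i) := by
  classical
  induction s using Finset.induction_on with
  | empty => intro x y; simp
  | insert a s hns ih =>
    rw [Finset.sum_insert hns]
    exact (hf a (s.mem_insert_self a)).add (ih fun i hi => hf i (Finset.mem_insert_of_mem hi))

theorem IsCent.aeval {f : Module.End k A} (hf : IsCent ⇑f) (p : Polynomial k) :
    IsCent ⇑(Polynomial.aeval f p) := by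
  induction p using Polynomial.induction_on with
  | C a =>
    rw [Polynomial.aeval_C, Module.algebraMap_end_eq_smul_id]
    exact IsCent.one.smul a
  | add p q hp hq => rw [map_add]; exact hp.add hq
  | monomial n a ih =>
    rw [pow_succ, ← mul_assoc, map_mul, Polynomial.aeval_X]
    exact ih.mul hf

end Cent

/-! ### Idempotent centroid elements give decompositions -/

section Decomp

variable {k : Type} [CommRing k] {A : Type} [NonUnitalRing A] [Module k A]
  [SMulCommClass k A A] [IsScalarTower k A A]

/-- Multiplication on a submodule closed under left multiplication. -/
abbrev subMul (S : Submodule k A) (hS : ∀ x y : A, x ∈ S → x * y ∈ S) : Mul S :=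
  ⟨fun a b => ⟨a.1 * b.1, hS _ _ a.2⟩⟩

abbrev subRing (S : Submodule k A) (hS : ∀ x y : A, x ∈ S → x * y ∈ S) : NonUnitalRing S :=
  letI : Mul S := subMul S hS
  { (inferInstance : AddCommGroup S) with
    mul := (· * ·)
    left_distrib := fun a b c => Subtype.ext (mul_add (a : A) b c)
    right_distrib := fun a b c => Subtype.ext (add_mul (a : A) b c)
    zero_mul := fun a => Subtype.ext (zero_mul (a : A))
    mul_zero := fun a => Subtype.ext (mul_zero (a : A))
    mul_assoc := fun a b c => Subtype.ext (mul_assoc (a : A) b c) }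

/-- A submodule closed under left multiplication, as a non-unital algebra. -/
def subNuAlg (S : Submodule k A) (hS : ∀ x y : A, x ∈ S → x * y ∈ S) : NuAlgebra k :=
  letI : NonUnitalRing S := subRing S hS
  { carrier := S
    instNonUnitalRing := inferInstance
    instModule := inferInstance
    instSMulCommClass := ⟨fun a x y => Subtype.ext ((mul_smul_comm a (x : A) (y : A)).symm)⟩
    instIsScalarTower := ⟨fun a x y => Subtype.ext (smul_mul_assoc a (x : A) (y : A))⟩ }

theorem isDecomposable_of_cent_idem (e : Module.End k A) (hc : IsCent ⇑e)
    (hi : e * e = e) (h0 : e ≠ 0) (h1 : e ≠ 1) : IsDecomposableAlg k A := by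
  have hee : ∀ x, e (e x) = e x := fun x => by
    have := congrArg (fun f : Module.End k A => f x) hi; simpa using this
  have hrange : ∀ x y : A, x ∈ LinearMap.range e → x * y ∈ LinearMap.range e := by
    rintro x y ⟨w, rfl⟩
    exact ⟨w * y, (hc w y).1⟩
  have hker : ∀ x y : A, x ∈ LinearMap.ker e → x * y ∈ LinearMap.ker e := by
    intro x y hx
    have h : e (x * y) = e x * y := (hc x y).1
    rw [LinearMap.mem_ker] at hx ⊢
    rw [h, hx, zero_mul]
  letI i1 : NonUnitalRing (LinearMap.range e) := subRing _ hrange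
  letI i2 : NonUnitalRing (LinearMap.ker e) := subRing _ hker
  have hre : ∀ x : A, x ∈ LinearMap.range e → e x = x := by
    rintro x ⟨w, rfl⟩; exact hee w
  have key : ∀ x y : A, e x * e y = e (x * y) := by
    intro x y
    have h1 : e (e x * y) = e x * e y := (hc (e x) y).2
    have h2 : e (x * y) = e x * y := (hc x y).1
    rw [← h1, ← h2, hee]
  have nt1 : Nontrivial (LinearMap.range e) := by
    have : ∃ x, e x ≠ 0 := by
      by_contra h; push_neg at h
      exact h0 (LinearMap.ext fun x => by simpa using h x)
    obtain ⟨x, hx⟩ := this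
    exact ⟨⟨⟨e x, ⟨x, rfl⟩⟩, 0, fun h => hx (by simpa using congrArg Subtype.val h)⟩⟩
  have nt2 : Nontrivial (LinearMap.ker e) := by
    have : ∃ x, x - e x ≠ 0 := by
      by_contra h; push_neg at h
      refine h1 (LinearMap.ext fun x => ?_)
      have hh := h x; rw [sub_eq_zero] at hh; simpa using hh.symm
    obtain ⟨x, hx⟩ := this
    have hmem : x - e x ∈ LinearMap.ker e := by
      rw [LinearMap.mem_ker, map_sub, hee, sub_self]
    exact ⟨⟨⟨x - e x, hmem⟩, 0, fun h => hx (by simpa using congrArg Subtype.val h)⟩⟩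
  have hiso : NuAlgIso k A (↥(LinearMap.range e) × ↥(LinearMap.ker e)) := by
    refine ⟨{ toFun := fun x => (⟨e x, ⟨x, rfl⟩⟩, ⟨x - e x, by
                rw [LinearMap.mem_ker, map_sub, hee, sub_self]⟩)
              invFun := fun p => (p.1 : A) + (p.2 : A)
              map_add' := fun x y => by
                refine Prod.ext (Subtype.ext ?_) (Subtype.ext ?_)
                · exact map_add e x y
                · show x + y - e (x + y) = (x - e x) + (y - e y)
                  rw [map_add]; abel
              map_smul' := fun a x => by
                refine Prod.ext (Subtype.ext ?_) (Subtype.ext ?_)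
                · exact map_smul e a x
                · show a • x - e (a • x) = a • (x - e x)
                  rw [map_smul, smul_sub]
              left_inv := fun x => by simp
              right_inv := fun p => by
                obtain ⟨⟨s, hs⟩, ⟨t, ht⟩⟩ := p
                have hs1 : e s = s := hre s hs
                have ht1 : e t = 0 := LinearMap.mem_ker.mp ht
                refine Prod.ext (Subtype.ext ?_) (Subtype.ext ?_)
                · show e (s + t) = s; rw [map_add, hs1, ht1, add_zero]
                · show s + t - e (s + t) = t
                  rw [map_add, hs1, ht1, add_zero, add_sub_cancel_left] },
          fun x y => ?_⟩
    refine Prod.ext (Subtype.ext ?_) (Subtype.ext ?_)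
    · exact (key x y).symm
    · show x * y - e (x * y) = (x - e x) * (y - e y)
      have hx1 := (hc x y).1
      have hx2 := (hc x y).2
      rw [sub_mul, mul_sub, mul_sub, ← hx1, ← hx2, key]
      abel
  exact ⟨subNuAlg _ hrange, subNuAlg _ hker, nt1, nt2, hiso⟩

end Decomp

/-! ### Unit or nilpotent -/

section Fitting

open Polynomial

variable {k : Type} [Field k] {V : Type} [NonUnitalRing V] [Module k V]
  [SMulCommClass k V V] [IsScalarTower k V V] [FiniteDimensional k V]

theorem isUnit_or_isNilpotent
    (Hidem : ∀ e : Module.End k V, IsCent ⇑e → e * e = e → e = 0 ∨ e = 1)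
    (c : Module.End k V) (hc : IsCent ⇑c) : IsUnit c ∨ IsNilpotent c := by
  have hint : IsIntegral k c := Algebra.IsIntegral.isIntegral c
  have hμ0 : minpoly k c ≠ 0 := minpoly.ne_zero hint
  have haev : Polynomial.aeval c (minpoly k c) = 0 := minpoly.aeval k c
  have unit_of : ∀ q : k[X], Polynomial.aeval c (X * q) = 1 → IsUnit c := by
    intro q hq
    have h1 : c * Polynomial.aeval c q = 1 := by
      rw [map_mul, Polynomial.aeval_X] at hq; exact hq
    have h2 : Polynomial.aeval c q * c = 1 := by
      rw [mul_comm X q, map_mul, Polynomial.aeval_X] at hq; exact hq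
    exact ⟨⟨c, Polynomial.aeval c q, h1, h2⟩, rfl⟩
  by_cases hu : IsUnit c
  · exact Or.inl hu
  right
  have hroot : (minpoly k c).coeff 0 = 0 := by
    by_contra hc0
    apply hu
    apply unit_of ((-(minpoly k c).coeff 0)⁻¹ • (minpoly k c).divX)
    have hXdiv : X * (minpoly k c).divX + C ((minpoly k c).coeff 0) = minpoly k c :=
      Polynomial.X_mul_divX_add _
    have hkey : Polynomial.aeval c (X * (minpoly k c).divX) = (-(minpoly k c).coeff 0) • 1 := by
      have := congrArg (Polynomial.aeval c) hXdiv
      rw [map_add, haev, Polynomial.aeval_C, Module.algebraMap_end_eq_smul_id] at this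
      have h2 := congrArg (fun z => z - ((minpoly k c).coeff 0 • LinearMap.id : Module.End k V)) this
      simp only [add_sub_cancel_right, zero_sub] at h2
      rw [h2, ← neg_smul]; rfl
    rw [mul_smul_comm, map_smul, hkey, smul_smul, inv_mul_cancel₀ (by simpa using hc0), one_smul]
  obtain ⟨q, hq, hnd⟩ :=
    (minpoly k c).exists_eq_pow_rootMultiplicity_mul_and_not_dvd hμ0 0
  rw [map_zero, sub_zero] at hq hnd
  set K := (minpoly k c).rootMultiplicity 0 with hKdef
  have hKpos : 0 < K := by
    rw [hKdef, Polynomial.rootMultiplicity_pos hμ0]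
    rw [Polynomial.IsRoot, ← Polynomial.coeff_zero_eq_eval_zero]
    exact hroot
  have hcop : IsCoprime ((X : k[X]) ^ K) q :=
    (Polynomial.irreducible_X.coprime_iff_not_dvd.mpr hnd).pow_left
  clear_value K
  obtain ⟨u, v, huv⟩ := hcop
  set e := Polynomial.aeval c (v * q) with hedef
  have h1e : Polynomial.aeval c (u * X ^ K) + e = 1 := by
    rw [hedef, ← map_add, huv, map_one]
  have horth : e * Polynomial.aeval c (u * X ^ K) = 0 := by
    rw [hedef, ← map_mul]
    have : v * q * (u * X ^ K) = v * u * (X ^ K * q) := by ring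
    rw [this, ← hq, map_mul, haev, mul_zero]
  have hee : e * e = e := by
    have h : e = e * Polynomial.aeval c (u * X ^ K) + e * e := by
      rw [← mul_add, h1e, mul_one]
    rw [horth, zero_add] at h
    exact h.symm
  rcases Hidem e (hc.aeval _) hee with h0 | h1
  · -- e = 0 : c is a unit, contradiction
    exfalso; apply hu
    obtain ⟨K', rfl⟩ : ∃ K', K = K' + 1 := ⟨K - 1, (Nat.succ_pred_eq_of_pos hKpos).symm⟩
    apply unit_of (u * X ^ K')
    have : u * X ^ (K' + 1) = X * (u * X ^ K') := by ring
    rw [← this]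
    rw [h0, add_zero] at h1e
    exact h1e
  · -- e = 1 : c is nilpotent
    rw [h1, add_eq_right] at h1e
    have hdvd : minpoly k c ∣ u * X ^ K := minpoly.dvd k c h1e
    rw [hq] at hdvd
    have hXK : (X : k[X]) ^ K ≠ 0 := pow_ne_zero _ Polynomial.X_ne_zero
    have hqu : q ∣ u := by
      have : X ^ K * q ∣ X ^ K * u := by
        have h' : u * X ^ K = X ^ K * u := by ring
        rwa [h'] at hdvd
      exact (mul_dvd_mul_iff_left hXK).mp this
    obtain ⟨w, rfl⟩ := hqu
    have hqunit : IsUnit q := by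
      apply IsUnit.of_mul_eq_one (a := q) (w * X ^ K + v)
      rw [← huv]; ring
    have hq0 : q ≠ 0 := by
      intro h; rw [h, mul_zero] at hq; exact hμ0 hq
    have hqC : q = C (q.coeff 0) :=
      Polynomial.eq_C_of_degree_le_zero (le_of_eq (Polynomial.degree_eq_zero_of_isUnit hqunit))
    have hα : q.coeff 0 ≠ 0 := by
      intro h; rw [h, map_zero] at hqC; exact hq0 hqC
    refine ⟨K, ?_⟩
    have : (0 : Module.End k V) = q.coeff 0 • c ^ K := by
      rw [← haev, hq, hqC, map_mul, Polynomial.aeval_C, Polynomial.aeval_X_pow,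
        Module.algebraMap_end_eq_smul_id]
      rw [mul_smul_comm]
      rw [show (LinearMap.id : Module.End k V) = 1 from rfl, mul_one, Polynomial.coeff_C_zero]
    exact (smul_eq_zero.mp this.symm).resolve_left hα

end Fitting

/-! ### Base change helpers -/

/-- The non-unital ring structure on `ℚ ⊗[ℤ] M`, as a local shortcut instance. -/
abbrev tensorNUR (M : Type) [NonUnitalRing M] : NonUnitalRing (ℚ ⊗[ℤ] M) :=
  Algebra.TensorProduct.instNonUnitalRing

section BaseChangeHelpers

attribute [local instance] tensorNUR

variable {M : Type} [NonUnitalRing M]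

theorem oneTmul_injective {ι : Type*} (b : Module.Basis ι ℤ M) :
    Function.Injective (fun x : M => ((1 : ℚ) ⊗ₜ[ℤ] x : ℚ ⊗[ℤ] M)) := by
  intro x y h
  have hrepr : ∀ i, ((b.repr x i : ℚ)) = ((b.repr y i : ℚ)) := by
    intro i
    have := congrArg (fun z : ℚ ⊗[ℤ] M => (b.baseChange ℚ).repr z i) h
    simpa [Module.Basis.baseChange_repr_tmul, zsmul_eq_mul] using this
  have : b.repr x = b.repr y := Finsupp.ext fun i => Int.cast_injective (hrepr i)
  exact b.repr.injective this

theorem baseChange_cent {f : M →ₗ[ℤ] M} (hf : IsCent ⇑f) :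
    IsCent ⇑(f.baseChange ℚ) := by
  have left : ∀ u v : ℚ ⊗[ℤ] M, (f.baseChange ℚ) (u * v) = (f.baseChange ℚ) u * v := by
    intro u v
    induction u with
    | zero => rw [zero_mul, map_zero, zero_mul]
    | tmul a x =>
      induction v with
      | zero => rw [mul_zero, map_zero, mul_zero]
      | tmul c y =>
        rw [Algebra.TensorProduct.tmul_mul_tmul, LinearMap.baseChange_tmul,
          LinearMap.baseChange_tmul, Algebra.TensorProduct.tmul_mul_tmul, (hf x y).1]
      | add v1 v2 h1 h2 => simp [mul_add, map_add, h1, h2]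
    | add u1 u2 h1 h2 => simp [add_mul, map_add, h1, h2]
  have right : ∀ u v : ℚ ⊗[ℤ] M, (f.baseChange ℚ) (u * v) = u * (f.baseChange ℚ) v := by
    intro u v
    induction u with
    | zero => rw [zero_mul, map_zero, zero_mul]
    | tmul a x =>
      induction v with
      | zero => rw [mul_zero, map_zero, mul_zero]
      | tmul c y =>
        rw [Algebra.TensorProduct.tmul_mul_tmul, LinearMap.baseChange_tmul,
          LinearMap.baseChange_tmul, Algebra.TensorProduct.tmul_mul_tmul, (hf x y).2]
      | add v1 v2 h1 h2 => simp [mul_add, map_add, h1, h2]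
    | add u1 u2 h1 h2 => simp [add_mul, map_add, h1, h2]
  exact fun u v => ⟨left u v, right u v⟩

theorem baseChange_mul_eq_zero {f g : M →ₗ[ℤ] M} (h : ∀ x y : M, f x * g y = 0) :
    ∀ u v : ℚ ⊗[ℤ] M, (f.baseChange ℚ) u * (g.baseChange ℚ) v = 0 := by
  intro u v
  induction u with
  | zero => rw [map_zero, zero_mul]
  | tmul a x =>
    induction v with
    | zero => rw [map_zero, mul_zero]
    | tmul c y =>
      rw [LinearMap.baseChange_tmul, LinearMap.baseChange_tmul,
        Algebra.TensorProduct.tmul_mul_tmul, h, TensorProduct.tmul_zero]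
    | add v1 v2 h1 h2 => rw [map_add, mul_add, h1, h2, add_zero]
  | add u1 u2 h1 h2 => rw [map_add, add_mul, h1, h2, add_zero]

theorem baseChange_sum {ι : Type*} (s : Finset ι) (f : ι → (M →ₗ[ℤ] M)) :
    (∑ i ∈ s, f i).baseChange ℚ = ∑ i ∈ s, (f i).baseChange ℚ := by
  classical
  induction s using Finset.induction_on with
  | empty => simpa using LinearMap.baseChange_zero
  | insert a s hns ih =>
    rw [Finset.sum_insert hns, Finset.sum_insert hns, LinearMap.baseChange_add, ih]

end BaseChangeHelpers

/-! ### Pi helpers -/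

section PiHelpers

variable {ι : Type*} [DecidableEq ι] {F : ι → Type} [∀ i, NonUnitalRing (F i)]

theorem pi_single_mul (i : ι) (x y : F i) :
    Pi.single i (x * y) = Pi.single i x * Pi.single i y := by
  funext j
  by_cases h : j = i
  · subst h; simp
  · simp [Pi.single_eq_of_ne h]

theorem pi_single_mul_ne {i i' : ι} (h : i ≠ i') (x : F i) (y : F i') :
    (Pi.single i x : ∀ j, F j) * Pi.single i' y = 0 := by
  funext j
  by_cases h1 : j = i
  · subst h1; simp [Pi.single_eq_of_ne h]
  · simp [Pi.single_eq_of_ne h1]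

theorem single_mul_left (i : ι) (x : F i) (z : ∀ j, F j) :
    (Pi.single i x : ∀ j, F j) * z = Pi.single i (x * z i) := by
  funext j
  by_cases h : j = i
  · subst h; simp
  · simp [Pi.single_eq_of_ne h]

theorem single_mul_right (i : ι) (x : F i) (z : ∀ j, F j) :
    z * (Pi.single i x : ∀ j, F j) = Pi.single i (z i * x) := by
  funext j
  by_cases h : j = i
  · subst h; simp
  · simp [Pi.single_eq_of_ne h]

end PiHelpers

/-! ### Freeness, rank one, and product cancellation -/

section Free

theorem finite_of_hyps {A : Type} [AddCommGroup A] (hfg : AddGroup.FG A) :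
    Module.Finite ℤ A := Module.Finite.iff_addGroup_fg.mpr hfg

theorem free_of_hyps {A : Type} [AddCommGroup A] (htf : AddMonoid.IsTorsionFree A)
    (hfg : AddGroup.FG A) : Module.Free ℤ A := by
  haveI : Module.Finite ℤ A := finite_of_hyps hfg
  haveI : IsAddTorsionFree A := ⟨fun n hn a b h => by
    by_contra hne
    exact htf (a - b) (sub_ne_zero.mpr hne) (isOfFinAddOrder_iff_nsmul_eq_zero.mpr
      ⟨n, Nat.pos_of_ne_zero hn, by rw [nsmul_sub]; exact sub_eq_zero.mpr h⟩)⟩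
  exact Module.free_of_finite_type_torsion_free'

end Free

section RankOne

attribute [local instance] tensorNUR

theorem tensor_zero_mul {A : Type} [NonUnitalRing A] (hz : ∀ x y : A, x * y = 0)
    (u v : ℚ ⊗[ℤ] A) : u * v = 0 := by
  induction u with
  | zero => rw [zero_mul]
  | tmul a x =>
    induction v with
    | zero => rw [mul_zero]
    | tmul c y => rw [Algebra.TensorProduct.tmul_mul_tmul, hz, TensorProduct.tmul_zero]
    | add v1 v2 h1 h2 => rw [mul_add, h1, h2, add_zero]
  | add u1 u2 h1 h2 => rw [add_mul, h1, h2, add_zero]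

theorem zeroMul_rank_one {A : Type} [NonUnitalRing A] (hnt : Nontrivial A)
    (htf : AddMonoid.IsTorsionFree A) (hfg : AddGroup.FG A)
    (hind : ¬ IsDecomposableAlg ℚ (ℚ ⊗[ℤ] A)) (hz : ∀ x y : A, x * y = 0) :
    Nonempty (A ≃+ ℤ) := by
  haveI : Module.Finite ℤ A := finite_of_hyps hfg
  haveI : Module.Free ℤ A := free_of_hyps htf hfg
  set ι := Module.Free.ChooseBasisIndex ℤ A with hι
  let b : Module.Basis ι ℤ A := Module.Free.chooseBasis ℤ A
  haveI : Fintype ι := inferInstance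
  haveI hne : Nonempty ι := by
    by_contra hempty
    haveI : IsEmpty ι := not_nonempty_iff.mp hempty
    haveI : Subsingleton (ι →₀ ℤ) := inferInstance
    haveI : Subsingleton A := b.repr.toEquiv.subsingleton
    exact false_of_nontrivial_of_subsingleton A
  by_cases hcard : Fintype.card ι = 1
  · -- rank one
    obtain ⟨i₀, hi₀⟩ := Fintype.card_eq_one_iff.mp hcard
    haveI : Unique ι := ⟨⟨i₀⟩, hi₀⟩
    exact ⟨b.repr.toAddEquiv.trans (Finsupp.LinearEquiv.finsuppUnique ℤ ℤ ι).toAddEquiv⟩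
  · -- rank ≥ 2 : contradiction
    exfalso
    have h2 : 1 < Fintype.card ι := by
      have := Fintype.card_pos (α := ι)
      omega
    apply hind
    set V := ℚ ⊗[ℤ] A
    have Vzero : ∀ u v : V, u * v = 0 := tensor_zero_mul hz
    let bV : Module.Basis ι ℚ V := b.baseChange ℚ
    obtain ⟨i₀⟩ := hne
    let e : Module.End ℚ V :=
      (LinearMap.toSpanSingleton ℚ V (bV i₀)).comp (bV.coord i₀)
    have he : ∀ x : V, e x = bV.coord i₀ x • bV i₀ := fun x => rfl
    have hcent : IsCent ⇑e := by
      intro u v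
      constructor
      · rw [Vzero u v, Vzero (e u) v, map_zero]
      · rw [Vzero u v, Vzero u (e v), map_zero]
    have hidem : e * e = e := by
      apply LinearMap.ext
      intro x
      simp [Module.End.mul_apply, he, Module.Basis.coord_apply, Module.Basis.repr_self, smul_smul]
    have hne0 : e ≠ 0 := by
      intro h
      have := congrArg (fun f : Module.End ℚ V => f (bV i₀)) h
      simp only [LinearMap.zero_apply, he] at this
      rw [Module.Basis.coord_apply, Module.Basis.repr_self, Finsupp.single_eq_same, one_smul] at this
      exact bV.ne_zero i₀ this
    have hne1 : e ≠ 1 := by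
      obtain ⟨i₁, hi₁⟩ := Fintype.exists_ne_of_one_lt_card h2 i₀
      intro h
      have := congrArg (fun f : Module.End ℚ V => f (bV i₁)) h
      simp only [Module.End.one_apply, he] at this
      rw [Module.Basis.coord_apply, Module.Basis.repr_self] at this
      rw [Finsupp.single_eq_of_ne' hi₁, zero_smul] at this
      exact bV.ne_zero i₁ this.symm
    exact isDecomposable_of_cent_idem e hcent hidem hne0 hne1

end RankOne

section ProdCancel

theorem prod_cancel {R A Q B : Type} [NonUnitalRing R] [NonUnitalRing A]
    [NonUnitalRing Q] [NonUnitalRing B] (Φ : (R × A) ≃+* (Q × B))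
    (ha : Function.Bijective (fun x : R => (Φ (x, 0)).1)) : Nonempty (A ≃+* B) := by
  let aF : R ≃ Q := Equiv.ofBijective _ ha
  have haF : ∀ x : R, aF x = (Φ (x, 0)).1 := fun x => rfl
  have haFadd : ∀ x y : R, aF (x + y) = aF x + aF y := by
    intro x y
    rw [haF, haF, haF, show ((x + y : R), (0 : A)) = (x, (0:A)) + (y, 0) by
      rw [Prod.mk_add_mk, add_zero], map_add]
    rfl
  have haFneg : ∀ x : R, aF (-x) = - aF x := by
    intro x
    have h0 : aF 0 = 0 := by
      rw [haF, show ((0:R), (0:A)) = 0 from rfl, map_zero]; rfl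
    have h := haFadd (-x) x
    rw [neg_add_cancel, h0] at h
    exact eq_neg_of_add_eq_zero_left h.symm
  have hsymadd : ∀ q q' : Q, aF.symm (q + q') = aF.symm q + aF.symm q' := by
    intro q q'
    apply aF.injective
    rw [haFadd, aF.apply_symm_apply, aF.apply_symm_apply, aF.apply_symm_apply]
  have hsymneg : ∀ q : Q, aF.symm (-q) = - aF.symm q := by
    intro q
    apply aF.injective
    rw [haFneg, aF.apply_symm_apply, aF.apply_symm_apply]
  set xv : A → R := fun y => - aF.symm ((Φ (0, y)).1) with hxv
  have hsplit : ∀ (x : R) (y : A), Φ (x, y) = Φ (x, 0) + Φ (0, y) := by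
    intro x y
    rw [← map_add]
    congr 1
    rw [Prod.mk_add_mk, add_zero, zero_add]
  have haFxv : ∀ y : A, aF (xv y) = -((Φ (0, y)).1) := by
    intro y
    rw [hxv]
    show aF (- aF.symm ((Φ (0, y)).1)) = _
    rw [haFneg, aF.apply_symm_apply]
  have hkey : ∀ y : A, (Φ (xv y, y)).1 = 0 := by
    intro y
    rw [hsplit, Prod.fst_add, ← haF, haFxv, neg_add_cancel]
  have hxvadd : ∀ y y' : A, xv (y + y') = xv y + xv y' := by
    intro y y'
    rw [hxv]
    show -aF.symm ((Φ (0, y + y')).1) = -aF.symm ((Φ (0, y)).1) + -aF.symm ((Φ (0, y')).1)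
    rw [show ((0:R), y + y') = ((0:R), y) + ((0:R), y') by rw [Prod.mk_add_mk, add_zero],
      map_add, Prod.fst_add, hsymadd, neg_add]
  have hxvmul : ∀ y y' : A, xv (y * y') = xv y * xv y' := by
    intro y y'
    apply aF.injective
    rw [haFxv, haF]
    have hprod : ((xv y * xv y' : R), (0 : A)) = (xv y, y) * (xv y', y') - ((0 : R), y * y') := by
      rw [Prod.mk_mul_mk, Prod.mk_sub_mk, sub_zero, sub_self]
    rw [hprod, map_sub, Prod.fst_sub, map_mul, Prod.fst_mul, hkey, hkey, zero_mul, zero_sub]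
  set Ψf : A → B := fun y => (Φ (xv y, y)).2 with hΨ
  have hinj : Function.Injective Ψf := by
    intro y y' h
    have hpair : Φ (xv y, y) = Φ (xv y', y') := by
      refine Prod.ext ?_ ?_
      · rw [hkey, hkey]
      · exact h
    have := Φ.injective hpair
    exact congrArg Prod.snd this
  have hsurj : Function.Surjective Ψf := by
    intro v
    set t := Φ.symm (0, v) with ht
    have hΦt : Φ t = (0, v) := Φ.apply_symm_apply _
    have hteta : (t.1, t.2) = t := rfl
    have hxvt : xv t.2 = t.1 := by
      apply aF.injective
      rw [haFxv, haF]
      have h1 : Φ (t.1, t.2) = Φ (t.1, 0) + Φ (0, t.2) := hsplit t.1 t.2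
      rw [hteta, hΦt] at h1
      have h2 := congrArg Prod.fst h1
      rw [Prod.fst_add] at h2
      have : (0 : Q) = (Φ (t.1, 0)).1 + (Φ (0, t.2)).1 := h2
      exact (eq_neg_of_add_eq_zero_left this.symm).symm
    refine ⟨t.2, ?_⟩
    rw [hΨ]
    show (Φ (xv t.2, t.2)).2 = v
    rw [hxvt, hteta, hΦt]
  have hadd : ∀ y y' : A, Ψf (y + y') = Ψf y + Ψf y' := by
    intro y y'
    rw [hΨ]
    show (Φ (xv (y + y'), y + y')).2 = (Φ (xv y, y)).2 + (Φ (xv y', y')).2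
    rw [hxvadd, show ((xv y + xv y' : R), y + y') = (xv y, y) + (xv y', y') by
      rw [Prod.mk_add_mk], map_add, Prod.snd_add]
  have hmul : ∀ y y' : A, Ψf (y * y') = Ψf y * Ψf y' := by
    intro y y'
    rw [hΨ]
    show (Φ (xv (y * y'), y * y')).2 = (Φ (xv y, y)).2 * (Φ (xv y', y')).2
    rw [hxvmul, show ((xv y * xv y' : R), y * y') = (xv y, y) * (xv y', y') by
      rw [Prod.mk_mul_mk], map_mul, Prod.snd_mul]
  exact ⟨{ Equiv.ofBijective Ψf ⟨hinj, hsurj⟩ with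
           map_add' := hadd
           map_mul' := hmul }⟩

end ProdCancel

/-! ### The exchange step -/

section Exchange

attribute [local instance] tensorNUR

theorem endUnit_injective {k : Type} [CommRing k] {V : Type} [AddCommGroup V] [Module k V]
    {f : Module.End k V} (h : IsUnit f) : Function.Injective ⇑f := by
  obtain ⟨u, rfl⟩ := h
  intro x y hxy
  have h1 : (↑u⁻¹ * ↑u : Module.End k V) = 1 := Units.inv_mul u
  have h2 := congrArg (fun g : Module.End k V => g x) h1
  have h3 := congrArg (fun g : Module.End k V => g y) h1
  simp only [Module.End.mul_apply, Module.End.one_apply] at h2 h3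
  rw [← h2, ← h3, hxy]

theorem exchange_step {n' m' : ℕ} (R : Fin (n' + 1) → Type) (Q : Fin (m' + 1) → Type)
    [∀ i, NonUnitalRing (R i)] [∀ j, NonUnitalRing (Q j)]
    (i₀ : Fin (n' + 1))
    (hnt : Nontrivial (R i₀))
    (htf : AddMonoid.IsTorsionFree (R i₀)) (hfg : AddGroup.FG (R i₀))
    (hindA : ¬ IsDecomposableAlg ℚ (ℚ ⊗[ℤ] R i₀))
    (hQtf : ∀ j, AddMonoid.IsTorsionFree (Q j)) (hQfg : ∀ j, AddGroup.FG (Q j))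
    (hQind : ∀ j, ¬ IsDecomposableAlg ℚ (ℚ ⊗[ℤ] Q j))
    (φ : (∀ i, R i) ≃+* (∀ j, Q j))
    (hx : ∃ x y : R i₀, x * y ≠ 0) :
    ∃ j₀ : Fin (m' + 1), Nonempty (R i₀ ≃+* Q j₀) ∧
      Nonempty ((∀ k, R (i₀.succAbove k)) ≃+* (∀ k, Q (j₀.succAbove k))) := by
  classical
  -- the maps a, b, c
  set aj : ∀ j, R i₀ → Q j := fun j x => φ (Pi.single i₀ x) j with haj
  set bj : ∀ j, Q j → R i₀ := fun j q => φ.symm (Pi.single j q) i₀ with hbj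
  set cj : ∀ j, R i₀ → R i₀ := fun j x => bj j (aj j x) with hcj
  have haadd : ∀ j (x y : R i₀), aj j (x + y) = aj j x + aj j y := by
    intro j x y
    rw [haj]
    show φ (Pi.single i₀ (x + y)) j = _
    rw [Pi.single_add, map_add]
    rfl
  have hamul : ∀ j (x y : R i₀), aj j (x * y) = aj j x * aj j y := by
    intro j x y
    show φ (Pi.single i₀ (x * y)) j = _
    rw [pi_single_mul, map_mul]
    rfl
  have hbadd : ∀ j (x y : Q j), bj j (x + y) = bj j x + bj j y := by
    intro j x y
    show φ.symm (Pi.single j (x + y)) i₀ = _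
    rw [Pi.single_add, map_add]
    rfl
  have hbmul : ∀ j (x y : Q j), bj j (x * y) = bj j x * bj j y := by
    intro j x y
    show φ.symm (Pi.single j (x * y)) i₀ = _
    rw [pi_single_mul, map_mul]
    rfl
  have hcadd : ∀ j (x y : R i₀), cj j (x + y) = cj j x + cj j y := by
    intro j x y; rw [hcj]; show bj j (aj j (x+y)) = _; rw [haadd, hbadd]
  -- centroid property of the c's
  have hcent : ∀ j, IsCent (cj j) := by
    intro j x y
    constructor
    · -- c (x*y) = c x * y
      show bj j (aj j (x * y)) = bj j (aj j x) * y
      have h1 : aj j (x * y) = (φ (Pi.single i₀ x) * φ (Pi.single i₀ y)) j := by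
        show φ (Pi.single i₀ (x * y)) j = _
        rw [pi_single_mul, map_mul]
      rw [h1]
      show φ.symm (Pi.single j ((φ (Pi.single i₀ x) * φ (Pi.single i₀ y)) j)) i₀ = _
      have h2 : (φ (Pi.single i₀ x) * φ (Pi.single i₀ y)) j
          = φ (Pi.single i₀ x) j * φ (Pi.single i₀ y) j := rfl
      rw [h2]
      have h3 : Pi.single j (φ (Pi.single i₀ x) j * φ (Pi.single i₀ y) j)
          = Pi.single j (φ (Pi.single i₀ x) j) * φ (Pi.single i₀ y) := by
        rw [single_mul_left]
      rw [h3, map_mul, RingEquiv.symm_apply_apply]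
      show (φ.symm (Pi.single j (φ (Pi.single i₀ x) j)) * Pi.single i₀ y) i₀ = _
      have h4 : (φ.symm (Pi.single j (φ (Pi.single i₀ x) j)) * Pi.single i₀ y) i₀
          = φ.symm (Pi.single j (φ (Pi.single i₀ x) j)) i₀ * (Pi.single i₀ y) i₀ := rfl
      rw [h4, Pi.single_eq_same]
    · -- c (x*y) = x * c y
      show bj j (aj j (x * y)) = x * bj j (aj j y)
      have h1 : aj j (x * y) = (φ (Pi.single i₀ x) * φ (Pi.single i₀ y)) j := by
        show φ (Pi.single i₀ (x * y)) j = _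
        rw [pi_single_mul, map_mul]
      rw [h1]
      show φ.symm (Pi.single j ((φ (Pi.single i₀ x) * φ (Pi.single i₀ y)) j)) i₀ = _
      have h2 : (φ (Pi.single i₀ x) * φ (Pi.single i₀ y)) j
          = φ (Pi.single i₀ x) j * φ (Pi.single i₀ y) j := rfl
      rw [h2]
      have h3 : Pi.single j (φ (Pi.single i₀ x) j * φ (Pi.single i₀ y) j)
          = φ (Pi.single i₀ x) * Pi.single j (φ (Pi.single i₀ y) j) := by
        rw [single_mul_right]
      rw [h3, map_mul, RingEquiv.symm_apply_apply]
      show (Pi.single i₀ x * φ.symm (Pi.single j (φ (Pi.single i₀ y) j))) i₀ = _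
      have h4 : (Pi.single i₀ x * φ.symm (Pi.single j (φ (Pi.single i₀ y) j))) i₀
          = (Pi.single i₀ x) i₀ * φ.symm (Pi.single j (φ (Pi.single i₀ y) j)) i₀ := rfl
      rw [h4, Pi.single_eq_same]
  -- sum of the c's is the identity
  have hsum : ∀ x : R i₀, ∑ j, cj j x = x := by
    intro x
    have h1 : ∀ j, cj j x = φ.symm (Pi.single j (φ (Pi.single i₀ x) j)) i₀ := fun j => rfl
    calc ∑ j, cj j x = ∑ j, φ.symm (Pi.single j (φ (Pi.single i₀ x) j)) i₀ := by
          simp only [h1]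
      _ = (∑ j, φ.symm (Pi.single j (φ (Pi.single i₀ x) j))) i₀ := by
          rw [Finset.sum_apply]
      _ = φ.symm (∑ j, Pi.single j (φ (Pi.single i₀ x) j)) i₀ := by rw [map_sum]
      _ = φ.symm (φ (Pi.single i₀ x)) i₀ := by rw [Finset.univ_sum_single]
      _ = x := by rw [RingEquiv.symm_apply_apply, Pi.single_eq_same]
  -- orthogonality
  have horth : ∀ j j' : Fin (m' + 1), j ≠ j' → ∀ x y : R i₀, cj j x * cj j' y = 0 := by
    intro j j' hjj x y
    have h1 : cj j x * cj j' y
        = (φ.symm (Pi.single j (aj j x)) * φ.symm (Pi.single j' (aj j' y))) i₀ := rfl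
    rw [h1, ← map_mul, pi_single_mul_ne hjj, map_zero]
    rfl
  -- bundle as ℤ-linear endomorphisms
  set cL : Fin (m' + 1) → Module.End ℤ (R i₀) :=
    fun j => (AddMonoidHom.mk' (cj j) (hcadd j)).toIntLinearMap with hcL
  have hcLapp : ∀ j x, cL j x = cj j x := fun j x => rfl
  have hcLcent : ∀ j, IsCent ⇑(cL j) := fun j => hcent j
  -- base change
  haveI : Module.Finite ℤ (R i₀) := finite_of_hyps hfg
  haveI : Module.Free ℤ (R i₀) := free_of_hyps htf hfg
  have hinj : Function.Injective (fun x : R i₀ => ((1 : ℚ) ⊗ₜ[ℤ] x : ℚ ⊗[ℤ] R i₀)) :=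
    oneTmul_injective (Module.Free.chooseBasis ℤ (R i₀))
  set ch : Fin (m' + 1) → Module.End ℚ (ℚ ⊗[ℤ] R i₀) :=
    fun j => (cL j).baseChange ℚ with hch
  have hchcent : ∀ j, IsCent ⇑(ch j) := fun j => baseChange_cent (hcLcent j)
  have Hidem : ∀ e : Module.End ℚ (ℚ ⊗[ℤ] R i₀), IsCent ⇑e → e * e = e → e = 0 ∨ e = 1 := by
    intro e hce hee
    by_contra hcon
    push_neg at hcon
    exact hindA (isDecomposable_of_cent_idem e hce hee hcon.1 hcon.2)
  have hLone : ∀ j, IsUnit (ch j) ∨ IsNilpotent (ch j) :=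
    fun j => isUnit_or_isNilpotent Hidem (ch j) (hchcent j)
  -- the nonzero product
  obtain ⟨x₀, y₀, hxy⟩ := hx
  set w : ℚ ⊗[ℤ] R i₀ := (1 : ℚ) ⊗ₜ[ℤ] (x₀ * y₀) with hw
  have hw0 : w ≠ 0 := by
    intro h
    apply hxy
    apply hinj
    show (1 : ℚ) ⊗ₜ[ℤ] (x₀ * y₀) = (1 : ℚ) ⊗ₜ[ℤ] (0 : R i₀)
    rw [TensorProduct.tmul_zero, ← hw, h]
  have hwprod : w = ((1 : ℚ) ⊗ₜ[ℤ] x₀) * ((1 : ℚ) ⊗ₜ[ℤ] y₀) := by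
    rw [Algebra.TensorProduct.tmul_mul_tmul, one_mul]
  -- sum is the identity
  have hsumL : (∑ j, cL j) = (1 : Module.End ℤ (R i₀)) := by
    apply LinearMap.ext
    intro x
    rw [LinearMap.sum_apply]
    exact hsum x
  have hsumV : (∑ j, ch j) = (1 : Module.End ℚ (ℚ ⊗[ℤ] R i₀)) := by
    rw [hch]
    show ∑ j, (cL j).baseChange ℚ = 1
    rw [← baseChange_sum, hsumL]
    exact LinearMap.baseChange_one ℤ (R i₀)
  -- orthogonality after base change
  have horthV : ∀ j j' : Fin (m' + 1), j ≠ j' →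
      ∀ u v : ℚ ⊗[ℤ] R i₀, ch j u * ch j' v = 0 :=
    fun j j' h => baseChange_mul_eq_zero (horth j j' h)
  -- nilpotent c's kill products
  have hkill : ∀ j, IsNilpotent (ch j) → ∀ u v : ℚ ⊗[ℤ] R i₀, ch j (u * v) = 0 := by
    intro j hnil u v
    obtain ⟨N, hN⟩ := hnil
    have hfix : ch j (u * v) = ch j (ch j (u * v)) := by
      have h1 : u * v = ∑ j', ch j' (u * v) := by
        rw [← LinearMap.sum_apply, hsumV, Module.End.one_apply]
      conv_lhs => rw [h1]
      rw [map_sum]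
      rw [Finset.sum_eq_single j]
      · intro j' _ hj'
        have h2 : ch j' (u * v) = ch j' u * v := ((hchcent j') u v).1
        have h3 : ch j (ch j' u * v) = ch j' u * ch j v := ((hchcent j) (ch j' u) v).2
        rw [h2, h3, horthV j' j hj']
      · intro h; exact absurd (Finset.mem_univ j) h
    have hiter : ∀ t : ℕ, ch j (u * v) = ((ch j) ^ t) (ch j (u * v)) := by
      intro t
      induction t with
      | zero => rw [pow_zero, Module.End.one_apply]
      | succ s ih =>
        rw [pow_succ, Module.End.mul_apply, ← hfix, ← ih]
    have := hiter N
    rw [hN] at this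
    simpa using this
  -- there is a unit
  have hexu : ∃ j₀, IsUnit (ch j₀) := by
    by_contra hno
    push_neg at hno
    have hallnil : ∀ j, IsNilpotent (ch j) := fun j => (hLone j).resolve_left (hno j)
    apply hw0
    have : w = ∑ j, ch j w := by
      rw [← LinearMap.sum_apply, hsumV, Module.End.one_apply]
    rw [this]
    apply Finset.sum_eq_zero
    intro j _
    rw [hwprod]
    exact hkill j (hallnil j) _ _
  obtain ⟨j₀, hj₀⟩ := hexu
  have hnilp : ∀ j, j ≠ j₀ → IsNilpotent (ch j) := by
    intro j hj
    rcases hLone j with hu | hn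
    · exfalso
      have hprod : ∀ u v : ℚ ⊗[ℤ] R i₀, (ch j * ch j₀) (u * v) = 0 := by
        intro u v
        rw [Module.End.mul_apply]
        have h1 : ch j₀ (u * v) = ch j₀ u * v := ((hchcent j₀) u v).1
        have h2 : ch j (ch j₀ u * v) = ch j₀ u * ch j v := ((hchcent j) (ch j₀ u) v).2
        rw [h1, h2, horthV j₀ j (Ne.symm hj)]
      have hinj2 : Function.Injective ⇑(ch j * ch j₀) := endUnit_injective (hu.mul hj₀)
      apply hw0
      have : (ch j * ch j₀) w = (ch j * ch j₀) 0 := by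
        rw [map_zero, hwprod]
        exact hprod _ _
      exact hinj2 this
    · exact hn
  -- the integral inverse d of c_{j₀}
  set κ : Module.End ℤ (R i₀) := 1 - cL j₀ with hκ
  have hκbc : κ.baseChange ℚ = 1 - ch j₀ := by
    rw [hκ, LinearMap.baseChange_sub, LinearMap.baseChange_one ℤ (R i₀)]
  have hκsum : (1 : Module.End ℚ (ℚ ⊗[ℤ] R i₀)) - ch j₀ = ∑ j ∈ Finset.univ.erase j₀, ch j := by
    have h1 : (∑ j ∈ Finset.univ.erase j₀, ch j) + ch j₀ = ∑ j, ch j :=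
      Finset.sum_erase_add _ _ (Finset.mem_univ j₀)
    rw [hsumV] at h1
    rw [← h1, add_sub_cancel_right]
  have hκkill : ∀ u v : ℚ ⊗[ℤ] R i₀, (κ.baseChange ℚ) (u * v) = 0 := by
    intro u v
    rw [hκbc, hκsum, LinearMap.sum_apply]
    apply Finset.sum_eq_zero
    intro j hj
    exact hkill j (hnilp j (Finset.ne_of_mem_erase hj)) u v
  have hκcent : IsCent ⇑(κ.baseChange ℚ) := by
    rw [hκbc]
    exact IsCent.one.sub (hchcent j₀)
  have hκnotunit : ¬ IsUnit (κ.baseChange ℚ) := by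
    intro hu
    apply hw0
    have h1 : (κ.baseChange ℚ) w = (κ.baseChange ℚ) 0 := by
      rw [map_zero, hwprod]
      exact hκkill _ _
    exact endUnit_injective hu h1
  have hκnil : IsNilpotent (κ.baseChange ℚ) :=
    (isUnit_or_isNilpotent Hidem _ hκcent).resolve_left hκnotunit
  obtain ⟨N, hN⟩ := hκnil
  have hN1 : (κ.baseChange ℚ) ^ (N + 1) = 0 := by rw [pow_succ, hN, zero_mul]
  have hκint : κ ^ (N + 1) = 0 := by
    apply LinearMap.ext
    intro x
    apply hinj
    show (1 : ℚ) ⊗ₜ[ℤ] ((κ ^ (N + 1)) x) = (1 : ℚ) ⊗ₜ[ℤ] (0 : R i₀)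
    rw [TensorProduct.tmul_zero, ← LinearMap.baseChange_tmul, LinearMap.baseChange_pow, hN1]
    rfl
  set d : Module.End ℤ (R i₀) := ∑ t ∈ Finset.range (N + 1), κ ^ t with hd
  have hc0 : cL j₀ = 1 - κ := by rw [hκ, sub_sub_cancel]
  have hdc : d * cL j₀ = 1 := by
    have h1 := geom_sum_mul κ (N + 1)
    rw [hκint, zero_sub] at h1
    rw [hc0, hd, ← neg_sub κ 1, mul_neg, h1, neg_neg]
  have hcd : cL j₀ * d = 1 := by
    have h1 := mul_geom_sum κ (N + 1)
    rw [hκint, zero_sub] at h1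
    rw [hc0, hd, ← neg_sub κ 1, neg_mul, h1, neg_neg]
  have hκcentI : IsCent ⇑κ := by
    rw [hκ]
    exact IsCent.one.sub (hcLcent j₀)
  have hdcent : IsCent ⇑d := by
    rw [hd]
    apply IsCent.sum
    intro t _
    rcases Nat.eq_zero_or_pos t with ht | ht
    · subst ht; rw [pow_zero]; exact IsCent.one
    · exact hκcentI.pow t ht.ne'
  -- the candidate isomorphism
  have hba : ∀ x : R i₀, bj j₀ (aj j₀ x) = cL j₀ x := fun x => rfl
  have hI1 : ∀ (r : R i₀) (q : Q j₀), aj j₀ r * q = aj j₀ (r * bj j₀ q) := by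
    intro r q
    show φ (Pi.single i₀ r) j₀ * q = φ (Pi.single i₀ (r * φ.symm (Pi.single j₀ q) i₀)) j₀
    rw [← single_mul_left, map_mul, RingEquiv.apply_symm_apply]
    show _ = φ (Pi.single i₀ r) j₀ * (Pi.single j₀ q) j₀
    rw [Pi.single_eq_same]
  have hI2 : ∀ (r : R i₀) (q : Q j₀), q * aj j₀ r = aj j₀ (bj j₀ q * r) := by
    intro r q
    show q * φ (Pi.single i₀ r) j₀ = φ (Pi.single i₀ (φ.symm (Pi.single j₀ q) i₀ * r)) j₀
    rw [← single_mul_right, map_mul, RingEquiv.apply_symm_apply]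
    show _ = (Pi.single j₀ q) j₀ * φ (Pi.single i₀ r) j₀
    rw [Pi.single_eq_same]
  set εf : Q j₀ → Q j₀ := fun q => aj j₀ (d (bj j₀ q)) with hεf
  have hεadd : ∀ q q' : Q j₀, εf (q + q') = εf q + εf q' := by
    intro q q'
    rw [hεf]
    show aj j₀ (d (bj j₀ (q + q'))) = _
    rw [hbadd, map_add, haadd]
  have hεcl : ∀ q q' : Q j₀, εf (q * q') = εf q * q' := by
    intro q q'
    show aj j₀ (d (bj j₀ (q * q'))) = aj j₀ (d (bj j₀ q)) * q'
    rw [hbmul, (hdcent (bj j₀ q) (bj j₀ q')).1, hI1]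
  have hεcr : ∀ q q' : Q j₀, εf (q * q') = q * εf q' := by
    intro q q'
    show aj j₀ (d (bj j₀ (q * q'))) = q * aj j₀ (d (bj j₀ q'))
    rw [hbmul, (hdcent (bj j₀ q) (bj j₀ q')).2, hI2]
  have hd1 : ∀ x : R i₀, d (cL j₀ (d x)) = d x := by
    intro x
    have := congrArg (fun f : Module.End ℤ (R i₀) => f (d x)) hdc
    simpa using this
  have hεidem : ∀ q : Q j₀, εf (εf q) = εf q := by
    intro q
    show aj j₀ (d (bj j₀ (aj j₀ (d (bj j₀ q))))) = _
    rw [hba, hd1]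
  set εL : Module.End ℤ (Q j₀) := (AddMonoidHom.mk' εf hεadd).toIntLinearMap with hεL
  have hεLL : εL * εL = εL := LinearMap.ext hεidem
  haveI : Module.Finite ℤ (Q j₀) := finite_of_hyps (hQfg j₀)
  haveI : Module.Free ℤ (Q j₀) := free_of_hyps (hQtf j₀) (hQfg j₀)
  have hinjQ : Function.Injective (fun x : Q j₀ => ((1 : ℚ) ⊗ₜ[ℤ] x : ℚ ⊗[ℤ] Q j₀)) :=
    oneTmul_injective (Module.Free.chooseBasis ℤ (Q j₀))
  have HidemQ : ∀ e : Module.End ℚ (ℚ ⊗[ℤ] Q j₀), IsCent ⇑e → e * e = e → e = 0 ∨ e = 1 := by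
    intro e hce hee
    by_contra hcon
    push_neg at hcon
    exact (hQind j₀) (isDecomposable_of_cent_idem e hce hee hcon.1 hcon.2)
  have hεhat_cent : IsCent ⇑(εL.baseChange ℚ) :=
    baseChange_cent (fun x y => ⟨hεcl x y, hεcr x y⟩)
  have hεhat_idem : εL.baseChange ℚ * εL.baseChange ℚ = εL.baseChange ℚ := by
    rw [← LinearMap.baseChange_mul, hεLL]
  rcases HidemQ (εL.baseChange ℚ) hεhat_cent hεhat_idem with h0 | h1
  · -- ε = 0 is impossible
    exfalso
    have hεzero : ∀ q : Q j₀, εf q = 0 := by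
      intro q
      apply hinjQ
      show (1 : ℚ) ⊗ₜ[ℤ] (εL q) = (1 : ℚ) ⊗ₜ[ℤ] (0 : Q j₀)
      rw [TensorProduct.tmul_zero, ← LinearMap.baseChange_tmul (A := ℚ) εL, h0]
      rfl
    have hcL0 : ∀ x : R i₀, cL j₀ x = 0 := by
      intro x
      have h1 : bj j₀ (εf (aj j₀ x)) = cL j₀ (d (cL j₀ x)) := by
        rw [hεf]
        show bj j₀ (aj j₀ (d (bj j₀ (aj j₀ x)))) = _
        rw [hba, hba]
      have h2 : cL j₀ (d (cL j₀ x)) = cL j₀ x := by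
        have := congrArg (fun f : Module.End ℤ (R i₀) => f (cL j₀ x)) hcd
        simpa using this
      have h3 : bj j₀ (0 : Q j₀) = 0 := by
        show φ.symm (Pi.single j₀ (0 : Q j₀)) i₀ = 0
        rw [Pi.single_zero, map_zero]
        rfl
      rw [hεzero, h3] at h1
      rw [← h2, ← h1]
    obtain ⟨z, hz⟩ := exists_ne (0 : R i₀)
    apply hz
    have := congrArg (fun f : Module.End ℤ (R i₀) => f z) hdc
    simp only [Module.End.mul_apply, Module.End.one_apply] at this
    rw [hcL0 z, map_zero] at this
    exact this.symm
  · -- ε = 1 : we get the isomorphism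
    have hεid : ∀ q : Q j₀, εf q = q := by
      intro q
      apply hinjQ
      show (1 : ℚ) ⊗ₜ[ℤ] (εL q) = (1 : ℚ) ⊗ₜ[ℤ] q
      rw [← LinearMap.baseChange_tmul (A := ℚ) εL, h1]
      rfl
    have hleft : ∀ x : R i₀, d (bj j₀ (aj j₀ x)) = x := by
      intro x
      rw [hba]
      have := congrArg (fun f : Module.End ℤ (R i₀) => f x) hdc
      simpa using this
    set giso : R i₀ ≃+* Q j₀ :=
      { toFun := aj j₀
        invFun := fun q => d (bj j₀ q)
        left_inv := hleft
        right_inv := hεid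
        map_add' := haadd j₀
        map_mul' := hamul j₀ } with hgiso
    -- the complement isomorphism
    have hRsplit : ∀ (f g : ∀ i, R i), (f * g) = fun i => f i * g i := fun f g => rfl
    set eR : (∀ i, R i) ≃+* (R i₀ × ∀ k, R (i₀.succAbove k)) :=
      { (Fin.insertNthEquiv R i₀).symm with
        map_add' := fun f g => rfl
        map_mul' := fun f g => rfl } with heR
    set eQ : (∀ j, Q j) ≃+* (Q j₀ × ∀ k, Q (j₀.succAbove k)) :=
      { (Fin.insertNthEquiv Q j₀).symm with
        map_add' := fun f g => rfl
        map_mul' := fun f g => rfl } with heQ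
    set Φ : (R i₀ × ∀ k, R (i₀.succAbove k)) ≃+* (Q j₀ × ∀ k, Q (j₀.succAbove k)) :=
      (eR.symm.trans φ).trans eQ with hΦ
    have hins : ∀ x : R i₀, (Fin.insertNthEquiv R i₀) (x, 0) = Pi.single i₀ x := by
      intro x
      funext l
      refine Fin.succAboveCases i₀ ?_ ?_ l
      · rw [Pi.single_eq_same]
        exact Fin.insertNth_apply_same i₀ x 0
      · intro k
        rw [Pi.single_eq_of_ne (Fin.succAbove_ne i₀ k)]
        exact Fin.insertNth_apply_succAbove i₀ x 0 k
    have hfun : ∀ x : R i₀, (Φ (x, 0)).1 = aj j₀ x := by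
      intro x
      show (eQ (φ (eR.symm (x, 0)))).1 = aj j₀ x
      have h2 : eR.symm (x, 0) = Pi.single i₀ x := hins x
      rw [h2]
      rfl
    have hbij : Function.Bijective (fun x : R i₀ => (Φ (x, 0)).1) := by
      have h3 : (fun x : R i₀ => (Φ (x, 0)).1) = aj j₀ := funext hfun
      rw [h3]
      exact giso.bijective
    obtain ⟨Ψ⟩ := prod_cancel Φ hbij
    exact ⟨j₀, ⟨giso⟩, ⟨Ψ⟩⟩

end Exchange

/-! ### The zero multiplication case -/

section ZeroCase

theorem zeroMul_case {n m : ℕ} (R : Fin n → Type) (Q : Fin m → Type)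
    [∀ i, NonUnitalRing (R i)] [∀ j, NonUnitalRing (Q j)]
    (hRnt : ∀ i, Nontrivial (R i)) (hQnt : ∀ j, Nontrivial (Q j))
    (hRtf : ∀ i, AddMonoid.IsTorsionFree (R i)) (hQtf : ∀ j, AddMonoid.IsTorsionFree (Q j))
    (hRfg : ∀ i, AddGroup.FG (R i)) (hQfg : ∀ j, AddGroup.FG (Q j))
    (hRind : ∀ i, ¬ IsDecomposableAlg ℚ (ℚ ⊗[ℤ] R i))
    (hQind : ∀ j, ¬ IsDecomposableAlg ℚ (ℚ ⊗[ℤ] Q j))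
    (φ : (∀ i, R i) ≃+* (∀ j, Q j))
    (hz : ∀ i (x y : R i), x * y = 0) :
    n = m ∧ ∃ σ : Fin n ≃ Fin m, ∀ i, Nonempty (R i ≃+* Q (σ i)) := by
  classical
  have hT : ∀ u v : (∀ i, R i), u * v = 0 := fun u v => funext fun i => hz i _ _
  have hQz : ∀ j (q q' : Q j), q * q' = 0 := by
    intro j q q'
    have h1 : (Pi.single j q : ∀ j', Q j') * Pi.single j q'
        = φ (φ.symm (Pi.single j q) * φ.symm (Pi.single j q')) := by
      rw [map_mul, RingEquiv.apply_symm_apply, RingEquiv.apply_symm_apply]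
    rw [hT, map_zero] at h1
    have h2 : (Pi.single j (q * q') : ∀ j', Q j') = 0 := by
      rw [pi_single_mul, h1]
    have := congrFun h2 j
    rwa [Pi.single_eq_same] at this
  have eRi : ∀ i, Nonempty (R i ≃+ ℤ) :=
    fun i => zeroMul_rank_one (hRnt i) (hRtf i) (hRfg i) (hRind i) (hz i)
  have eQj : ∀ j, Nonempty (Q j ≃+ ℤ) :=
    fun j => zeroMul_rank_one (hQnt j) (hQtf j) (hQfg j) (hQind j) (hQz j)
  have eR : ∀ i, R i ≃+ ℤ := fun i => Classical.choice (eRi i)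
  have eQ : ∀ j, Q j ≃+ ℤ := fun j => Classical.choice (eQj j)
  have hnm : n = m := by
    have e1 : (∀ i, R i) ≃+ (Fin n → ℤ) := AddEquiv.piCongrRight eR
    have e2 : (∀ j, Q j) ≃+ (Fin m → ℤ) := AddEquiv.piCongrRight eQ
    have E : (Fin n → ℤ) ≃+ (Fin m → ℤ) :=
      (e1.symm.trans (AddEquiv.mk' φ.toEquiv φ.map_add)).trans e2
    have L : (Fin n → ℤ) ≃ₗ[ℤ] (Fin m → ℤ) := E.toIntLinearEquiv
    have h1 := LinearEquiv.finrank_eq L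
    rwa [Module.finrank_fin_fun, Module.finrank_fin_fun] at h1
  refine ⟨hnm, finCongr hnm, ?_⟩
  intro i
  refine ⟨{ (eR i).trans (eQ (finCongr hnm i)).symm with
            map_mul' := ?_ }⟩
  intro x y
  show ((eR i).trans (eQ (finCongr hnm i)).symm) (x * y) = _
  rw [hz i x y, map_zero, hQz]

end ZeroCase

/-! ### Main induction -/

theorem main_aux (n : ℕ) : ∀ (m : ℕ) (R : Fin n → Type) (Q : Fin m → Type)
    [instR : ∀ i, NonUnitalRing (R i)] [instQ : ∀ j, NonUnitalRing (Q j)],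
    (∀ i, Nontrivial (R i)) → (∀ j, Nontrivial (Q j)) →
    (∀ i, AddMonoid.IsTorsionFree (R i)) → (∀ j, AddMonoid.IsTorsionFree (Q j)) →
    (∀ i, AddGroup.FG (R i)) → (∀ j, AddGroup.FG (Q j)) →
    (∀ i, ¬ IsDecomposableAlg ℚ (ℚ ⊗[ℤ] R i)) → (∀ j, ¬ IsDecomposableAlg ℚ (ℚ ⊗[ℤ] Q j)) →
    ((∀ i, R i) ≃+* (∀ j, Q j)) →
    n = m ∧ ∃ σ : Fin n ≃ Fin m, ∀ i, Nonempty (R i ≃+* Q (σ i)) := by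
  induction n with
  | zero =>
    intro m R Q instR instQ hRnt hQnt hRtf hQtf hRfg hQfg hRind hQind φ
    exact zeroMul_case R Q hRnt hQnt hRtf hQtf hRfg hQfg hRind hQind φ (fun i => i.elim0)
  | succ n' IH =>
    intro m R Q instR instQ hRnt hQnt hRtf hQtf hRfg hQfg hRind hQind φ
    by_cases hz : ∀ i (x y : R i), x * y = 0
    · exact zeroMul_case R Q hRnt hQnt hRtf hQtf hRfg hQfg hRind hQind φ hz
    · push_neg at hz
      obtain ⟨i₀, x₀, y₀, hxy⟩ := hz
      cases m with
      | zero =>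
        exfalso
        haveI : Subsingleton (∀ j : Fin 0, Q j) := ⟨fun a b => funext fun j => j.elim0⟩
        have hsub : ∀ x y : R i₀, x = y := by
          intro x y
          have h := φ.injective
            (Subsingleton.elim (φ (Pi.single i₀ x)) (φ (Pi.single i₀ y)))
          have := congrFun h i₀
          rwa [Pi.single_eq_same, Pi.single_eq_same] at this
        obtain ⟨a, b, hab⟩ := hRnt i₀
        exact hab (hsub a b)
      | succ m' =>
        obtain ⟨j₀, ⟨g⟩, ⟨Ψ⟩⟩ := exchange_step R Q i₀ (hRnt i₀) (hRtf i₀) (hRfg i₀)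
          (hRind i₀) hQtf hQfg hQind φ ⟨x₀, y₀, hxy⟩
        obtain ⟨hnm, σ', hσ'⟩ := @IH m' (fun k => R (i₀.succAbove k))
          (fun k => Q (j₀.succAbove k)) (fun k => instR _) (fun k => instQ _)
          (fun k => hRnt _) (fun k => hQnt _) (fun k => hRtf _) (fun k => hQtf _)
          (fun k => hRfg _) (fun k => hQfg _) (fun k => hRind _) (fun k => hQind _) Ψ
        refine ⟨by omega, ?_⟩
        subst hnm
        set σ := (finSuccEquiv' i₀).trans ((Equiv.optionCongr σ').trans (finSuccEquiv' j₀).symm)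
          with hσ
        refine ⟨σ, ?_⟩
        intro i
        refine Fin.succAboveCases i₀ ?_ ?_ i
        · have hσi : σ i₀ = j₀ := by
            rw [hσ]
            simp only [Equiv.trans_apply, finSuccEquiv'_at, Equiv.optionCongr_apply,
              Option.map_none]
            exact finSuccEquiv'_symm_none j₀
          rw [hσi]
          exact ⟨g⟩
        · intro k
          have hσk : σ (i₀.succAbove k) = j₀.succAbove (σ' k) := by
            rw [hσ]
            simp only [Equiv.trans_apply, finSuccEquiv'_succAbove, Equiv.optionCongr_apply,
              Option.map_some]
            exact finSuccEquiv'_symm_some j₀ (σ' k)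
          rw [hσk]
          exact hσ' k


/-- **Integral Krull–Schmidt theorem for non-unital rings** (Corollary A.5 of the
paper). Let `R₁, …, Rₙ` and `Q₁, …, Q_m` be nonzero non-unital rings whose
additive groups are torsion-free and finitely generated. If all the base changes
`Rᵢ ⊗_ℤ ℚ`, `Qⱼ ⊗_ℤ ℚ` (here written `ℚ ⊗[ℤ] Rᵢ` etc., with the induced
multiplication `(a ⊗ x)(b ⊗ y) = ab ⊗ xy`) are indecomposable non-unital
`ℚ`-algebras and, for each prime `p`, all `Rᵢ ⊗_ℤ ℤ/p`, `Qⱼ ⊗_ℤ ℤ/p` are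
indecomposable non-unital `ℤ/p`-algebras, and if
`R₁ × ⋯ × Rₙ ≅ Q₁ × ⋯ × Q_m` as non-unital rings, then `n = m` and, after a
permutation, `Rᵢ ≅ Q_{σ(i)}` as non-unital rings. -/
theorem integral_krull_schmidt (n m : ℕ)
    (R : Fin n → Type) (Q : Fin m → Type)
    [∀ i, NonUnitalRing (R i)] [∀ j, NonUnitalRing (Q j)]
    (hRnt : ∀ i, Nontrivial (R i)) (hQnt : ∀ j, Nontrivial (Q j))
    (hRtf : ∀ i, AddMonoid.IsTorsionFree (R i))
    (hQtf : ∀ j, AddMonoid.IsTorsionFree (Q j))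
    (hRfg : ∀ i, AddGroup.FG (R i)) (hQfg : ∀ j, AddGroup.FG (Q j))
    (hRindQ : ∀ i, ¬ IsDecomposableAlg ℚ (ℚ ⊗[ℤ] R i))
    (hQindQ : ∀ j, ¬ IsDecomposableAlg ℚ (ℚ ⊗[ℤ] Q j))
    (hRindp : ∀ (p : ℕ), p.Prime → ∀ i, ¬ IsDecomposableAlg (ZMod p) (ZMod p ⊗[ℤ] R i))
    (hQindp : ∀ (p : ℕ), p.Prime → ∀ j, ¬ IsDecomposableAlg (ZMod p) (ZMod p ⊗[ℤ] Q j))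
    (hiso : Nonempty ((∀ i, R i) ≃+* (∀ j, Q j))) :
    n = m ∧ ∃ σ : Fin n ≃ Fin m, ∀ i, Nonempty (R i ≃+* Q (σ i)) := by
  obtain ⟨φ⟩ := hiso
  exact main_aux n m R Q hRnt hQnt hRtf hQtf hRfg hQfg hRindQ hQindQ φ
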